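/- Let 𝔉 be a union-closed family of subsets of X = {a₁,…,aₙ}, let S ⊆ 𝔉 be an antichain, and let ℱ = φ_w(𝔉) for w = a₁a₂…aₙ. Then Σ_{f ∈ 𝔉[S]} |f| ≥ (n/2)·|𝔉[S]| + (1/2)·Σ_{a∈X} ( |π_w(a) ∩ S↑| − |σ_w(a) ∩ S↑| ), with equality when S = min(𝔉). -/

import Mathlib

open Finset

variable {α : Type*} [DecidableEq α]

/-- A family is union-closed if it is closed under pairwise unions. -/
def UnionClosed (F : Finset (Finset α)) : Prop := ∀ f ∈ F, ∀ g ∈ F, f ∪ g ∈ F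

/-- One rising step: φ_{S,a}(z) = z ∪ {a} if z ∪ {a} ∉ S, and z otherwise. -/
def riseStep (S : Finset (Finset α)) (a : α) (z : Finset α) : Finset α :=
  if insert a z ∈ S then z else insert a z

/-- Iterated rising function along a word (list of letters): at each step the
current family is replaced by its image and the next letter is risen. -/
def riseWord (S : Finset (Finset α)) : List α → Finset α → Finset α
  | [], z => z
  | a :: u, z => riseWord (S.image (riseStep S a)) u (riseStep S a z)

/-- The section of a family along (a prefix of) a word. -/
def riseSections (S : Finset (Finset α)) : List α → Finset (Finset α)
  | [] => S
  | a :: u => riseSections (S.image (riseStep S a)) u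

/-- The spurious elements σ_w(𝔉,a): the elements η ∈ ℱ = φ_w(𝔉) with
a ∈ η \ φ_w⁻¹(η), i.e. η = φ_w(f) with f ∈ 𝔉, a ∉ f, a ∈ η. -/
def spurious (F : Finset (Finset α)) (w : List α) (a : α) : Finset (Finset α) :=
  ((F.filter fun f => a ∉ f).image (riseWord F w)).filter fun η => a ∈ η

/-- The pure elements π_w(𝔉,a): the elements η ∈ φ_w(𝔉_a) with η \ {a} ∉ ℱ. -/
def pureF (F : Finset (Finset α)) (w : List α) (a : α) : Finset (Finset α) :=
  ((F.filter fun f => a ∈ f).image (riseWord F w)).filter fun η =>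
    η.erase a ∉ F.image (riseWord F w)

/-- The set of minimal elements of a family (under inclusion). -/
def minsF (F : Finset (Finset α)) : Finset (Finset α) :=
  F.filter fun h => ∀ g ∈ F, g ⊆ h → g = h

/-- The principal ideal 𝔉[S] = { f ∈ 𝔉 : ∃ z ∈ S, z ⊆ f }. -/
def idealF (F S : Finset (Finset α)) : Finset (Finset α) :=
  F.filter fun f => ∃ z ∈ S, z ⊆ f

/-- The intersection T ∩ S↑ of a family T with the up-closure of S. -/
def upFilter (S T : Finset (Finset α)) : Finset (Finset α) :=
  T.filter fun t => ∃ z ∈ S, z ⊆ t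

section Lemmas
variable {α : Type*} [DecidableEq α]

lemma subset_riseStep (S : Finset (Finset α)) (a : α) (z : Finset α) :
    z ⊆ riseStep S a z := by
  unfold riseStep; split
  · exact Finset.Subset.refl z
  · exact Finset.subset_insert a z

lemma riseStep_subset (S : Finset (Finset α)) (a : α) (z : Finset α) :
    riseStep S a z ⊆ insert a z := by
  unfold riseStep; split
  · exact Finset.subset_insert a z
  · exact Finset.Subset.refl _

lemma subset_riseWord : ∀ (u : List α) (H : Finset (Finset α)) (z : Finset α),
    z ⊆ riseWord H u z
  | [], _, _ => Finset.Subset.refl _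
  | a :: u, H, z =>
    (subset_riseStep H a z).trans (subset_riseWord u _ _)

lemma mem_of_mem_riseWord : ∀ (u : List α) (H : Finset (Finset α)) (z : Finset α) {b : α},
    b ∈ riseWord H u z → b ∈ z ∨ b ∈ u
  | [], _, _, _, hb => Or.inl hb
  | a :: u, H, z, b, hb => by
    rcases mem_of_mem_riseWord u _ _ hb with h | h
    · have := riseStep_subset H a z h
      rcases Finset.mem_insert.1 this with h' | h'
      · exact Or.inr (by simp [h'])
      · exact Or.inl h'
    · exact Or.inr (List.mem_cons_of_mem _ h)

lemma riseStep_mem_image {H : Finset (Finset α)} (a : α) {z : Finset α} (hz : z ∈ H) :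
    riseStep H a z ∈ H.image (riseStep H a) :=
  Finset.mem_image_of_mem _ hz

lemma riseWord_mem_sections : ∀ (u : List α) (H : Finset (Finset α)) {z : Finset α},
    z ∈ H → riseWord H u z ∈ riseSections H u
  | [], _, _, hz => hz
  | a :: u, H, z, hz => riseWord_mem_sections u _ (riseStep_mem_image a hz)

lemma riseSections_eq_image : ∀ (u : List α) (H : Finset (Finset α)),
    riseSections H u = H.image (riseWord H u)
  | [], H => (Finset.image_id (s := H)).symm
  | a :: u, H => by
    show riseSections (H.image (riseStep H a)) u = _
    rw [riseSections_eq_image u, Finset.image_image]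
    rfl

lemma riseStep_injOn {H : Finset (Finset α)} {a : α} {z₁ z₂ : Finset α}
    (h₁ : z₁ ∈ H) (h₂ : z₂ ∈ H) (heq : riseStep H a z₁ = riseStep H a z₂) : z₁ = z₂ := by
  unfold riseStep at heq
  split_ifs at heq with p1 p2 p2
  · exact heq
  · exact absurd (by rw [heq, Finset.insert_idem] at p1; exact p1) p2
  · exact absurd (by rw [← heq, Finset.insert_idem] at p2; exact p2) p1
  · have ha1 : a ∉ z₁ := fun ha => p1 (by rwa [Finset.insert_eq_self.2 ha])
    have ha2 : a ∉ z₂ := fun ha => p2 (by rwa [Finset.insert_eq_self.2 ha])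
    have := congrArg (fun s => Finset.erase s a) heq
    simpa [Finset.erase_insert ha1, Finset.erase_insert ha2] using this

lemma riseWord_injOn : ∀ (u : List α) (H : Finset (Finset α)) {z₁ z₂ : Finset α},
    z₁ ∈ H → z₂ ∈ H → riseWord H u z₁ = riseWord H u z₂ → z₁ = z₂
  | [], _, _, _, _, _, heq => heq
  | a :: u, H, z₁, z₂, h₁, h₂, heq =>
    riseStep_injOn h₁ h₂
      (riseWord_injOn u _ (riseStep_mem_image a h₁) (riseStep_mem_image a h₂) heq)

end Lemmas
section Lemmas2
variable {α : Type*} [DecidableEq α]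

lemma unionClosed_image_riseStep {H : Finset (Finset α)} (hU : UnionClosed H) (a : α) :
    UnionClosed (H.image (riseStep H a)) := by
  intro f' hf' g' hg'
  obtain ⟨f, hf, rfl⟩ := Finset.mem_image.1 hf'
  obtain ⟨g, hg, rfl⟩ := Finset.mem_image.1 hg'
  have hs : f ∪ g ∈ H := hU f hf g hg
  have hsub1 : f ∪ g ⊆ riseStep H a f ∪ riseStep H a g :=
    Finset.union_subset_union (subset_riseStep H a f) (subset_riseStep H a g)
  have hsub2 : riseStep H a f ∪ riseStep H a g ⊆ insert a (f ∪ g) :=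
    Finset.union_subset
      ((riseStep_subset H a f).trans (Finset.insert_subset_insert a Finset.subset_union_left))
      ((riseStep_subset H a g).trans (Finset.insert_subset_insert a Finset.subset_union_right))
  by_cases hat : a ∈ riseStep H a f ∪ riseStep H a g
  · have ht : riseStep H a f ∪ riseStep H a g = insert a (f ∪ g) :=
      Finset.Subset.antisymm hsub2 (Finset.insert_subset hat hsub1)
    rw [ht]
    by_cases hins : insert a (f ∪ g) ∈ H
    · have : riseStep H a (insert a (f ∪ g)) = insert a (f ∪ g) := by
        unfold riseStep; rw [if_pos (by rwa [Finset.insert_idem])]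
      rw [← this]; exact riseStep_mem_image a hins
    · have : riseStep H a (f ∪ g) = insert a (f ∪ g) := by
        unfold riseStep; rw [if_neg hins]
      rw [← this]; exact riseStep_mem_image a hs
  · have ht : riseStep H a f ∪ riseStep H a g = f ∪ g := by
      apply Finset.Subset.antisymm _ hsub1
      intro x hx
      rcases Finset.mem_insert.1 (hsub2 hx) with rfl | h
      · exact absurd hx hat
      · exact h
    rw [ht]
    by_cases hins : insert a (f ∪ g) ∈ H
    · have : riseStep H a (f ∪ g) = f ∪ g := by unfold riseStep; rw [if_pos hins]
      rw [← this]; exact riseStep_mem_image a hs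
    · exfalso
      have haf : insert a f ∈ H := by
        by_cases h : insert a f ∈ H
        · exact h
        · exfalso
          have : riseStep H a f = insert a f := by unfold riseStep; rw [if_neg h]
          exact hat (Finset.mem_union_left _ (this ▸ Finset.mem_insert_self a f))
      have hag : insert a g ∈ H := by
        by_cases h : insert a g ∈ H
        · exact h
        · exfalso
          have : riseStep H a g = insert a g := by unfold riseStep; rw [if_neg h]
          exact hat (Finset.mem_union_right _ (this ▸ Finset.mem_insert_self a g))
      have := hU _ haf _ hag
      rw [Finset.insert_union, Finset.union_insert, Finset.insert_idem] at this
      exact hins this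

lemma unionClosed_sections : ∀ (u : List α) (H : Finset (Finset α)),
    UnionClosed H → UnionClosed (riseSections H u)
  | [], _, hU => hU
  | a :: u, H, hU => unionClosed_sections u _ (unionClosed_image_riseStep hU a)

/-- characterization of members of the image not containing `a`. -/
lemma mem_image_riseStep_not_mem {H : Finset (Finset α)} {a : α} {ξ : Finset α}
    (hξ : ξ ∈ H.image (riseStep H a)) (ha : a ∉ ξ) : ξ ∈ H ∧ insert a ξ ∈ H := by
  obtain ⟨z, hz, rfl⟩ := Finset.mem_image.1 hξ
  unfold riseStep at *
  split_ifs at * with h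
  · exact ⟨hz, h⟩
  · exact absurd (Finset.mem_insert_self a z) ha

lemma invA_image_self {H : Finset (Finset α)} {a : α} :
    ∀ ξ ∈ H.image (riseStep H a), a ∉ ξ → insert a ξ ∈ H.image (riseStep H a) := by
  intro ξ hξ ha
  obtain ⟨_, h2⟩ := mem_image_riseStep_not_mem hξ ha
  have : riseStep H a (insert a ξ) = insert a ξ := by
    unfold riseStep; rw [if_pos (by rwa [Finset.insert_idem])]
  rw [← this]; exact riseStep_mem_image a h2

lemma invA_image_other {H : Finset (Finset α)} {a c : α} (hac : c ≠ a)
    (hA : ∀ ξ ∈ H, a ∉ ξ → insert a ξ ∈ H) :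
    ∀ ξ ∈ H.image (riseStep H c), a ∉ ξ → insert a ξ ∈ H.image (riseStep H c) := by
  intro ξ' hξ' ha
  obtain ⟨ξ, hξ, rfl⟩ := Finset.mem_image.1 hξ'
  have haξ : a ∉ ξ := fun h => ha (subset_riseStep H c ξ h)
  have hins : insert a ξ ∈ H := hA ξ hξ haξ
  unfold riseStep at ha ⊢
  split_ifs with h
  · -- kept : ξ' = ξ, insert c ξ ∈ H
    have hac' : a ∉ insert c ξ := by
      simp only [Finset.mem_insert]; rintro (rfl | h'); exact hac rfl; exact haξ h'
    have : insert c (insert a ξ) ∈ H := by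
      have := hA _ h hac'
      rwa [Finset.insert_comm] at this
    have hstep : riseStep H c (insert a ξ) = insert a ξ := by
      unfold riseStep; rw [if_pos this]
    rw [← hstep]; exact riseStep_mem_image c hins
  · -- rose : ξ' = insert c ξ
    rw [Finset.insert_comm]
    by_cases h2 : insert c (insert a ξ) ∈ H
    · have hstep : riseStep H c (insert c (insert a ξ)) = insert c (insert a ξ) := by
        unfold riseStep; rw [if_pos (by rwa [Finset.insert_idem])]
      rw [← hstep]; exact riseStep_mem_image c h2
    · have hstep : riseStep H c (insert a ξ) = insert c (insert a ξ) := by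
        unfold riseStep; rw [if_neg h2]
      rw [← hstep]; exact riseStep_mem_image c hins

lemma invA_sections : ∀ (u : List α) (H : Finset (Finset α)) (a : α),
    (∀ ξ ∈ H, a ∉ ξ → insert a ξ ∈ H) →
    ∀ ξ ∈ riseSections H u, a ∉ ξ → insert a ξ ∈ riseSections H u
  | [], _, _, hA => hA
  | c :: u, H, a, hA => by
    by_cases hca : c = a
    · subst hca
      exact invA_sections u _ c invA_image_self
    · exact invA_sections u _ a (invA_image_other hca hA)

lemma invA_final : ∀ (w : List α) (F : Finset (Finset α)) {a : α}, a ∈ w →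
    ∀ ξ ∈ riseSections F w, a ∉ ξ → insert a ξ ∈ riseSections F w
  | [], _, a, haw => absurd haw List.not_mem_nil
  | c :: u, F, a, haw => by
    by_cases hca : c = a
    · subst hca
      exact invA_sections u _ c invA_image_self
    · have hau : a ∈ u := (List.mem_cons.1 haw).resolve_left (fun h => hca h.symm)
      exact invA_final u _ hau

end Lemmas2
section Lemmas3
variable {α : Type*} [DecidableEq α]

/-- band invariant: once an element became spurious, its erase-a never re-enters. -/
lemma riseGood : ∀ (u : List α) (H : Finset (Finset α)) (η : Finset α) {a : α},
    UnionClosed H → η ∈ H → a ∈ η →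
    (∀ ζ ∈ H, (∀ x ∈ η, x ≠ a → x ∉ u → x ∈ ζ) → ζ ⊆ η.erase a → False) →
    (riseWord H u η).erase a ∉ riseSections H u
  | [], H, η, a, _, _, _, hband => fun hmem =>
      hband (η.erase a) hmem
        (fun x hx hxa _ => Finset.mem_erase.2 ⟨hxa, hx⟩) (Finset.Subset.refl _)
  | c :: u, H, η, a, hU, hη, ha, hband => by
    show (riseWord (H.image (riseStep H c)) u (riseStep H c η)).erase a ∉
      riseSections (H.image (riseStep H c)) u
    have haη' : a ∈ riseStep H c η := subset_riseStep H c η ha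
    apply riseGood u _ _ (unionClosed_image_riseStep hU c) (riseStep_mem_image c hη) haη'
    intro ζ' hζ' hlow hup
    obtain ⟨τ, hτ, hτeq⟩ := Finset.mem_image.1 hζ'
    have hηsub : riseStep H c η ⊆ insert c η := riseStep_subset H c η
    by_cases hkept : insert c τ ∈ H
    · -- ζ' = τ
      have hζτ : ζ' = τ := by rw [← hτeq]; unfold riseStep; rw [if_pos hkept]
      subst hζτ
      by_cases hηk : insert c η ∈ H
      · -- η kept
        have hηη : riseStep H c η = η := by unfold riseStep; rw [if_pos hηk]
        refine hband ζ' hτ ?_ ?_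
        · intro x hx hxa hxu
          simp only [List.mem_cons, not_or] at hxu
          exact hlow x (by rw [hηη]; exact hx) hxa hxu.2
        · rwa [hηη] at hup
      · -- η rose
        have hcη : c ∉ η := fun h => hηk (by rwa [Finset.insert_eq_self.2 h])
        have hηη : riseStep H c η = insert c η := by unfold riseStep; rw [if_neg hηk]
        by_cases hcζ : c ∈ ζ'
        · -- contradiction via union-closedness
          apply hηk
          have huζ : η ∪ ζ' = insert c η := by
            apply Finset.Subset.antisymm
            · refine Finset.union_subset (Finset.subset_insert c η) ?_
              refine hup.trans ?_
              rw [hηη]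
              exact (Finset.erase_subset a _)
            · exact Finset.insert_subset (Finset.mem_union_right _ hcζ)
                Finset.subset_union_left
          rw [← huζ]; exact hU η hη ζ' hτ
        · refine hband ζ' hτ ?_ ?_
          · intro x hx hxa hxu
            simp only [List.mem_cons, not_or] at hxu
            exact hlow x (by rw [hηη]; exact Finset.mem_insert_of_mem hx) hxa hxu.2
          · intro x hx
            have hxe := hup hx
            rw [hηη] at hxe
            have hxa := (Finset.mem_erase.1 hxe).1
            rcases Finset.mem_insert.1 (Finset.mem_of_mem_erase hxe) with rfl | h
            · exact absurd hx hcζ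
            · exact Finset.mem_erase.2 ⟨hxa, h⟩
    · -- ζ' = insert c τ, c ∉ τ
      have hζτ : ζ' = insert c τ := by rw [← hτeq]; unfold riseStep; rw [if_neg hkept]
      have hcτ : c ∉ τ := fun h => hkept (by rwa [Finset.insert_eq_self.2 h])
      refine hband τ hτ ?_ ?_
      · intro x hx hxa hxu
        simp only [List.mem_cons, not_or] at hxu
        have hxζ : x ∈ ζ' := hlow x (subset_riseStep H c η hx) hxa hxu.2
        rw [hζτ] at hxζ
        rcases Finset.mem_insert.1 hxζ with rfl | h
        · exact absurd rfl hxu.1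
        · exact h
      · intro x hx
        have hxζ : x ∈ ζ' := hζτ ▸ Finset.mem_insert_of_mem hx
        have hxe := hup hxζ
        have hxa := (Finset.mem_erase.1 hxe).1
        rcases Finset.mem_insert.1 (hηsub (Finset.mem_of_mem_erase hxe)) with rfl | h
        · exact absurd hx hcτ
        · exact Finset.mem_erase.2 ⟨hxa, h⟩

/-- spurious elements: their erase-a is not in the final family. -/
lemma spurious_erase_not_mem : ∀ (w : List α) (F : Finset (Finset α)) (f : Finset α) {a : α},
    w.Nodup → UnionClosed F → f ∈ F → a ∉ f → a ∈ riseWord F w f →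
    (riseWord F w f).erase a ∉ riseSections F w
  | [], _, f, a, _, _, _, haf, ha => absurd ha haf
  | c :: u, F, f, a, hnd, hU, hf, haf, ha => by
    show (riseWord (F.image (riseStep F c)) u (riseStep F c f)).erase a ∉
      riseSections (F.image (riseStep F c)) u
    by_cases hca : c = a
    · subst hca
      by_cases hk : insert c f ∈ F
      · -- kept : c ∉ riseWord at all, contradiction
        exfalso
        have hstep : riseStep F c f = f := by unfold riseStep; rw [if_pos hk]
        have : c ∈ riseWord (F.image (riseStep F c)) u (riseStep F c f) := ha
        rw [hstep] at this
        rcases mem_of_mem_riseWord u _ _ this with h | h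
        · exact haf h
        · exact (List.nodup_cons.1 hnd).1 h
      · -- rose
        have hstep : riseStep F c f = insert c f := by unfold riseStep; rw [if_neg hk]
        rw [hstep]
        apply riseGood u _ _ (unionClosed_image_riseStep hU c)
          (hstep ▸ riseStep_mem_image c hf) (Finset.mem_insert_self c f)
        intro ζ hζ _ hup
        have hζf : ζ ⊆ f := by
          refine hup.trans ?_
          rw [Finset.erase_insert haf]
        have hcζ : c ∉ ζ := fun h => haf (hζf h)
        obtain ⟨hζF, hicζ⟩ := mem_image_riseStep_not_mem hζ hcζ
        apply hk
        have : f ∪ insert c ζ = insert c f := by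
          rw [Finset.union_insert]
          congr 1
          exact Finset.union_eq_left.2 hζf
        rw [← this]
        exact hU f hf _ hicζ
    · have haf' : a ∉ riseStep F c f := fun h => by
        rcases Finset.mem_insert.1 (riseStep_subset F c f h) with rfl | h'
        · exact hca rfl
        · exact haf h'
      exact spurious_erase_not_mem u _ _ (List.nodup_cons.1 hnd).2
        (unionClosed_image_riseStep hU c) (riseStep_mem_image c hf) haf' ha

/-- the key anti-rising invariant, used to show φ_w reflects the order. -/
lemma noRise : ∀ (u : List α) (H : Finset (Finset α)) (t z : Finset α) (b : α) (s : Finset α),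
    UnionClosed H → b ∈ z → b ∉ t → s ∈ H → insert b t ⊆ s → s ⊆ t ∪ z →
    ¬ z ⊆ riseWord H u t
  | [], _, t, z, b, s, _, hbz, hbt, _, _, _ => fun hzt => hbt (hzt hbz)
  | c :: u, H, t, z, b, s, hU, hbz, hbt, hs, hlow, hup => by
    show ¬ z ⊆ riseWord (H.image (riseStep H c)) u (riseStep H c t)
    have htins : t ⊆ s := (Finset.subset_insert b t).trans hlow
    by_cases hk : insert c t ∈ H
    · -- t kept
      have hstep : riseStep H c t = t := by unfold riseStep; rw [if_pos hk]
      rw [hstep]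
      have hcs : insert c s ∈ H := by
        have := hU s hs _ hk
        rwa [Finset.union_insert, Finset.union_eq_left.2 htins] at this
      have hsimg : s ∈ H.image (riseStep H c) := by
        have : riseStep H c s = s := by unfold riseStep; rw [if_pos hcs]
        exact this ▸ riseStep_mem_image c hs
      exact noRise u _ t z b s (unionClosed_image_riseStep hU c) hbz hbt hsimg hlow hup
    · -- t rose
      have hstep : riseStep H c t = insert c t := by unfold riseStep; rw [if_neg hk]
      rw [hstep]
      by_cases hcb : c = b
      · -- witness switch
        subst hcb
        have hne : s ≠ insert c t := fun h => hk (h ▸ hs)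
        obtain ⟨b', hb's, hb't⟩ := Finset.exists_of_ssubset (lt_of_le_of_ne hlow (Ne.symm hne))
        have hb'z : b' ∈ z := by
          rcases Finset.mem_union.1 (hup hb's) with h | h
          · exact absurd (Finset.mem_insert_of_mem h) hb't
          · exact h
        have hsimg : s ∈ H.image (riseStep H c) := by
          have hcs : c ∈ s := hlow (Finset.mem_insert_self c t)
          have : riseStep H c s = s := by
            unfold riseStep; rw [if_pos (by rwa [Finset.insert_eq_self.2 hcs])]
          exact this ▸ riseStep_mem_image c hs
        exact noRise u _ _ z b' s (unionClosed_image_riseStep hU c) hb'z hb't hsimg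
          (Finset.insert_subset hb's hlow)
          (hup.trans (Finset.union_subset_union (Finset.subset_insert c t) (Finset.Subset.refl z)))
      · -- same witness b, new s := insert c s
        have hsimg : insert c s ∈ H.image (riseStep H c) := by
          by_cases h2 : insert c s ∈ H
          · have : riseStep H c (insert c s) = insert c s := by
              unfold riseStep; rw [if_pos (by rwa [Finset.insert_idem])]
            exact this ▸ riseStep_mem_image c h2
          · have : riseStep H c s = insert c s := by unfold riseStep; rw [if_neg h2]
            exact this ▸ riseStep_mem_image c hs
        refine noRise u _ _ z b (insert c s) (unionClosed_image_riseStep hU c) hbz ?_ hsimg ?_ ?_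
        · simp only [Finset.mem_insert, not_or]
          exact ⟨fun h => hcb h.symm, hbt⟩
        · intro x hx
          rcases Finset.mem_insert.1 hx with rfl | hx
          · exact Finset.mem_insert_of_mem (hlow (Finset.mem_insert_self x t))
          · rcases Finset.mem_insert.1 hx with rfl | hx
            · exact Finset.mem_insert_self x s
            · exact Finset.mem_insert_of_mem (hlow (Finset.mem_insert_of_mem hx))
        · intro x hx
          rcases Finset.mem_insert.1 hx with rfl | hx
          · exact Finset.mem_union_left _ (Finset.mem_insert_self x t)
          · rcases Finset.mem_union.1 (hup hx) with h | h
            · exact Finset.mem_union_left _ (Finset.mem_insert_of_mem h)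
            · exact Finset.mem_union_right _ h

/-- φ_w reflects inclusions from members of the family. -/
lemma riseWord_reflect {w : List α} {F : Finset (Finset α)} (hU : UnionClosed F)
    {z f : Finset α} (hz : z ∈ F) (hf : f ∈ F) (hsub : z ⊆ riseWord F w f) : z ⊆ f := by
  by_contra hns
  obtain ⟨b, hbz, hbf⟩ := Finset.not_subset.1 hns
  exact noRise w F f z b (f ∪ z) hU hbz hbf (hU f hf z hz)
    (Finset.insert_subset (Finset.mem_union_right f hbz) Finset.subset_union_left)
    (Finset.Subset.refl _) hsub

lemma exists_min_aux (F : Finset (Finset α)) :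
    ∀ (n : ℕ) (h : Finset α), h.card ≤ n → h ∈ F → ∃ z ∈ minsF F, z ⊆ h := by
  intro n
  induction n with
  | zero =>
    intro h hc hh
    refine ⟨h, ?_, Finset.Subset.refl h⟩
    unfold minsF
    refine Finset.mem_filter.2 ⟨hh, fun g _ hgh => ?_⟩
    have : h = ∅ := Finset.card_eq_zero.1 (Nat.le_zero.1 hc)
    subst this
    exact Finset.subset_empty.1 hgh
  | succ n ih =>
    intro h hc hh
    by_cases hmin : ∀ g ∈ F, g ⊆ h → g = h
    · exact ⟨h, Finset.mem_filter.2 ⟨hh, hmin⟩, Finset.Subset.refl h⟩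
    · push_neg at hmin
      obtain ⟨g, hg, hgh, hne⟩ := hmin
      have : g.card < h.card := Finset.card_lt_card (lt_of_le_of_ne hgh hne)
      obtain ⟨z, hz, hzg⟩ := ih g (by omega) hg
      exact ⟨z, hz, hzg.trans hgh⟩

lemma exists_min {F : Finset (Finset α)} {h : Finset α} (hh : h ∈ F) :
    ∃ z ∈ minsF F, z ⊆ h :=
  exists_min_aux F h.card h le_rfl hh

end Lemmas3
section Counting
variable {α : Type*} [DecidableEq α]
variable {F S : Finset (Finset α)} {w : List α}

lemma up_iff (hU : UnionClosed F) (hS : S ⊆ F) {f : Finset α} (hf : f ∈ F) :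
    (∃ z ∈ S, z ⊆ riseWord F w f) ↔ (∃ z ∈ S, z ⊆ f) := by
  constructor
  · rintro ⟨z, hz, hsub⟩
    exact ⟨z, hz, riseWord_reflect hU (hS hz) hf hsub⟩
  · rintro ⟨z, hz, hsub⟩
    exact ⟨z, hz, hsub.trans (subset_riseWord w F f)⟩

lemma injOn_subset {A : Finset (Finset α)} (hA : A ⊆ F) :
    Set.InjOn (riseWord F w) ↑A := fun x hx y hy hxy =>
  riseWord_injOn w F (hA hx) (hA hy) hxy

lemma key_sigma (hU : UnionClosed F) (hS : S ⊆ F) (a : α) :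
    upFilter S (spurious F w a) =
      ((idealF F S).filter fun f => a ∉ f ∧ a ∈ riseWord F w f).image (riseWord F w) := by
  ext η
  simp only [upFilter, spurious, idealF, Finset.mem_filter, Finset.mem_image,
    Finset.filter_filter]
  constructor
  · rintro ⟨⟨f, ⟨hfF, haf⟩, rfl⟩, haη, hup⟩
    exact ⟨f, ⟨hfF, (up_iff (w := w) hU hS hfF).1 hup, haf, haη⟩, rfl⟩
  · rintro ⟨f, ⟨hfF, hupf, haf, haΦ⟩, rfl⟩
    exact ⟨⟨f, ⟨hfF, haf⟩, rfl⟩, haΦ, (up_iff (w := w) hU hS hfF).2 hupf⟩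

lemma key_pi (hU : UnionClosed F) (hS : S ⊆ F) (a : α) :
    upFilter S (pureF F w a) =
      ((idealF F S).filter fun f => a ∈ f ∧
        (riseWord F w f).erase a ∉ F.image (riseWord F w)).image (riseWord F w) := by
  ext η
  simp only [upFilter, pureF, idealF, Finset.mem_filter, Finset.mem_image,
    Finset.filter_filter]
  constructor
  · rintro ⟨⟨f, ⟨hfF, haf⟩, rfl⟩, hner, hup⟩
    exact ⟨f, ⟨hfF, (up_iff (w := w) hU hS hfF).1 hup, haf, hner⟩, rfl⟩
  · rintro ⟨f, ⟨hfF, hupf, haf, hner⟩, rfl⟩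
    exact ⟨⟨f, ⟨hfF, haf⟩, rfl⟩, hner, (up_iff (w := w) hU hS hfF).2 hupf⟩

lemma key_ineq (hU : UnionClosed F) (hS : S ⊆ F) (hnd : w.Nodup)
    (a : α) (haw : a ∈ w) :
    ((idealF F S).filter fun f => a ∉ f ∧ a ∉ riseWord F w f).card ≤
      ((idealF F S).filter fun f => a ∈ f ∧
        (riseWord F w f).erase a ∈ F.image (riseWord F w)).card := by
  have hAF : idealF F S ⊆ F := Finset.filter_subset _ F
  have hL := Finset.card_image_of_injOn
    (injOn_subset (w := w) ((Finset.filter_subset _ _).trans hAF)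
      (A := (idealF F S).filter fun f => a ∉ f ∧ a ∉ riseWord F w f))
  have hR := Finset.card_image_of_injOn
    (injOn_subset (w := w) ((Finset.filter_subset _ _).trans hAF)
      (A := (idealF F S).filter fun f => a ∈ f ∧
        (riseWord F w f).erase a ∈ F.image (riseWord F w)))
  rw [← hL, ← hR]
  apply Finset.card_le_card_of_injOn (fun ξ => insert a ξ)
  · intro ξ hξ
    obtain ⟨f, hf, rfl⟩ := Finset.mem_image.1 hξ
    simp only [idealF, Finset.mem_filter, Finset.filter_filter] at hf
    obtain ⟨hfF, hupf, haf, haΦ⟩ := hf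
    have hξsec : riseWord F w f ∈ riseSections F w := riseWord_mem_sections w F hfF
    have hmem : insert a (riseWord F w f) ∈ riseSections F w :=
      invA_final w F haw _ hξsec haΦ
    rw [riseSections_eq_image] at hmem
    obtain ⟨g, hgF, hgeq⟩ := Finset.mem_image.1 hmem
    have hgerase : (riseWord F w g).erase a = riseWord F w f := by
      rw [hgeq, Finset.erase_insert haΦ]
    have hag : a ∈ g := by
      by_contra hag
      have haΦg : a ∈ riseWord F w g := hgeq ▸ Finset.mem_insert_self a _
      have := spurious_erase_not_mem w F g hnd hU hgF hag haΦg
      rw [hgerase] at this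
      exact this hξsec
    have hupg : ∃ z ∈ S, z ⊆ g := by
      refine (up_iff (w := w) hU hS hgF).1 ?_
      obtain ⟨z, hz, hzf⟩ := hupf
      exact ⟨z, hz, (hzf.trans (subset_riseWord w F f)).trans
        (by rw [hgeq]; exact Finset.subset_insert a _)⟩
    simp only [Finset.mem_coe]
    rw [← hgeq]
    refine Finset.mem_image_of_mem _ ?_
    simp only [idealF, Finset.mem_filter, Finset.filter_filter]
    refine ⟨hgF, hupg, hag, ?_⟩
    rw [hgerase, ← riseSections_eq_image]
    exact hξsec
  · intro ξ₁ hξ₁ ξ₂ hξ₂ heq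
    have hna : ∀ ξ ∈ ((idealF F S).filter fun f => a ∉ f ∧ a ∉ riseWord F w f).image
        (riseWord F w), a ∉ ξ := by
      intro ξ hξ
      obtain ⟨f, hf, rfl⟩ := Finset.mem_image.1 hξ
      simp only [idealF, Finset.mem_filter, Finset.filter_filter] at hf
      exact hf.2.2.2
    have h1 := hna ξ₁ hξ₁
    have h2 := hna ξ₂ hξ₂
    rw [← Finset.erase_insert h1, ← Finset.erase_insert h2]
    exact congrArg (fun s => Finset.erase s a) heq

lemma key_eq (hU : UnionClosed F) (hS : S ⊆ F) (hnd : w.Nodup)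
    (hmin : S = minsF F) (a : α) (haw : a ∈ w) :
    ((idealF F S).filter fun f => a ∉ f ∧ a ∉ riseWord F w f).card =
      ((idealF F S).filter fun f => a ∈ f ∧
        (riseWord F w f).erase a ∈ F.image (riseWord F w)).card := by
  refine le_antisymm (key_ineq hU hS hnd a haw) ?_
  have hAF : idealF F S ⊆ F := Finset.filter_subset _ F
  have hL := Finset.card_image_of_injOn
    (injOn_subset (w := w) ((Finset.filter_subset _ _).trans hAF)
      (A := (idealF F S).filter fun f => a ∉ f ∧ a ∉ riseWord F w f))
  have hR := Finset.card_image_of_injOn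
    (injOn_subset (w := w) ((Finset.filter_subset _ _).trans hAF)
      (A := (idealF F S).filter fun f => a ∈ f ∧
        (riseWord F w f).erase a ∈ F.image (riseWord F w)))
  rw [← hL, ← hR]
  apply Finset.card_le_card_of_injOn (fun ξ => ξ.erase a)
  · intro ξ hξ
    obtain ⟨g, hg, rfl⟩ := Finset.mem_image.1 hξ
    simp only [idealF, Finset.mem_filter, Finset.filter_filter] at hg
    obtain ⟨hgF, hupg, hag, herase⟩ := hg
    obtain ⟨h, hhF, hheq⟩ := Finset.mem_image.1 herase
    have hah : a ∉ h := by
      intro hah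
      have : a ∈ (riseWord F w g).erase a := hheq ▸ subset_riseWord w F h hah
      exact (Finset.mem_erase.1 this).1 rfl
    have haΦh : a ∉ riseWord F w h := by
      rw [hheq]; exact fun hc => (Finset.mem_erase.1 hc).1 rfl
    have huph : ∃ z ∈ S, z ⊆ h := by
      rw [hmin]
      exact exists_min hhF
    simp only [Finset.mem_coe]
    rw [← hheq]
    refine Finset.mem_image_of_mem _ ?_
    simp only [idealF, Finset.mem_filter, Finset.filter_filter]
    exact ⟨hhF, huph, hah, haΦh⟩
  · intro ξ₁ hξ₁ ξ₂ hξ₂ heq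
    have hyes : ∀ ξ ∈ ((idealF F S).filter fun f => a ∈ f ∧
        (riseWord F w f).erase a ∈ F.image (riseWord F w)).image (riseWord F w), a ∈ ξ := by
      intro ξ hξ
      obtain ⟨f, hf, rfl⟩ := Finset.mem_image.1 hξ
      simp only [idealF, Finset.mem_filter, Finset.filter_filter] at hf
      exact subset_riseWord w F f hf.2.2.1
    have h1 := hyes ξ₁ hξ₁
    have h2 := hyes ξ₂ hξ₂
    rw [← Finset.insert_erase h1, ← Finset.insert_erase h2]
    exact congrArg (fun s => insert a s) heq

end Counting

/-- Proposition 5.8: for an antichain S ⊆ 𝔉,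
Σ_{f ∈ 𝔉[S]} |f| ≥ (n/2)|𝔉[S]| + (1/2)Σ_{a∈X}(|π_w(a) ∩ S↑| − |σ_w(a) ∩ S↑|),
with equality when S = min(𝔉). -/
theorem stmt_15 {α : Type*} [DecidableEq α] [Fintype α]
    (F : Finset (Finset α)) (hF : UnionClosed F)
    (hcov : ∀ x : α, ∃ f ∈ F, x ∈ f)
    (w : List α) (hnd : w.Nodup) (hall : ∀ x : α, x ∈ w)
    (S : Finset (Finset α)) (hS : S ⊆ F) (hSne : S.Nonempty)
    (hanti : ∀ f ∈ S, ∀ g ∈ S, f ⊆ g → f = g) :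
    (∑ f ∈ idealF F S, (f.card : ℝ)) ≥
      (Fintype.card α : ℝ) / 2 * (idealF F S).card +
      (1 / 2) * ∑ a : α,
        (((upFilter S (pureF F w a)).card : ℝ) - ((upFilter S (spurious F w a)).card : ℝ)) ∧
    (S = minsF F →
      (∑ f ∈ idealF F S, (f.card : ℝ)) =
        (Fintype.card α : ℝ) / 2 * (idealF F S).card +
        (1 / 2) * ∑ a : α,
          (((upFilter S (pureF F w a)).card : ℝ) - ((upFilter S (spurious F w a)).card : ℝ))) := by
  have hAF : idealF F S ⊆ F := Finset.filter_subset _ F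
  -- cardinality identities
  have hP : ∀ a : α, (upFilter S (pureF F w a)).card =
      ((idealF F S).filter fun f => a ∈ f ∧
        (riseWord F w f).erase a ∉ F.image (riseWord F w)).card := fun a => by
    rw [key_pi hF hS a]
    exact Finset.card_image_of_injOn
      (injOn_subset ((Finset.filter_subset _ _).trans hAF))
  have hSg : ∀ a : α, (upFilter S (spurious F w a)).card =
      ((idealF F S).filter fun f => a ∉ f ∧ a ∈ riseWord F w f).card := fun a => by
    rw [key_sigma hF hS a]
    exact Finset.card_image_of_injOn
      (injOn_subset ((Finset.filter_subset _ _).trans hAF))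
  have h0 : ∀ a : α, ((idealF F S).filter fun f => a ∈ f).card +
      ((idealF F S).filter fun f => a ∉ f).card = (idealF F S).card := fun a =>
    Finset.card_filter_add_card_filter_not (p := fun f => a ∈ f)
  have h1 : ∀ a : α, ((idealF F S).filter fun f => a ∈ f ∧
        (riseWord F w f).erase a ∈ F.image (riseWord F w)).card +
      ((idealF F S).filter fun f => a ∈ f ∧
        (riseWord F w f).erase a ∉ F.image (riseWord F w)).card =
      ((idealF F S).filter fun f => a ∈ f).card := fun a => by
    rw [← Finset.filter_filter, ← Finset.filter_filter]
    exact Finset.card_filter_add_card_filter_not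
      (p := fun f => (riseWord F w f).erase a ∈ F.image (riseWord F w))
  have h2 : ∀ a : α, ((idealF F S).filter fun f => a ∉ f ∧ a ∈ riseWord F w f).card +
      ((idealF F S).filter fun f => a ∉ f ∧ a ∉ riseWord F w f).card =
      ((idealF F S).filter fun f => a ∉ f).card := fun a => by
    rw [← Finset.filter_filter, ← Finset.filter_filter]
    exact Finset.card_filter_add_card_filter_not
      (p := fun f => a ∈ riseWord F w f)
  -- the double counting of the left-hand side
  have hsum : (∑ f ∈ idealF F S, (f.card : ℝ)) =
      ∑ a : α, (((idealF F S).filter fun f => a ∈ f).card : ℝ) := by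
    calc ∑ f ∈ idealF F S, (f.card : ℝ)
        = ∑ f ∈ idealF F S, ∑ a : α, (if a ∈ f then (1 : ℝ) else 0) := by
          refine Finset.sum_congr rfl fun f _ => ?_
          rw [Finset.sum_ite_mem, Finset.univ_inter, Finset.sum_const, nsmul_eq_mul, mul_one]
      _ = ∑ a : α, ∑ f ∈ idealF F S, (if a ∈ f then (1 : ℝ) else 0) := Finset.sum_comm
      _ = ∑ a : α, (((idealF F S).filter fun f => a ∈ f).card : ℝ) := by
          refine Finset.sum_congr rfl fun a _ => ?_
          rw [Finset.sum_boole]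
  -- rewrite the right-hand side as a sum over a
  have hrhs : (Fintype.card α : ℝ) / 2 * (idealF F S).card +
      (1 / 2) * ∑ a : α,
        (((upFilter S (pureF F w a)).card : ℝ) - ((upFilter S (spurious F w a)).card : ℝ)) =
      ∑ a : α, (((idealF F S).card : ℝ) / 2 +
        (1 / 2) * (((upFilter S (pureF F w a)).card : ℝ) -
          ((upFilter S (spurious F w a)).card : ℝ))) := by
    rw [Finset.sum_add_distrib, Finset.sum_const, ← Finset.mul_sum]
    simp only [Finset.card_univ, nsmul_eq_mul]
    ring
  constructor
  · rw [hsum, hrhs, ge_iff_le]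
    refine Finset.sum_le_sum fun a _ => ?_
    have hkey := key_ineq hF hS hnd a (hall a)
    have e0 := h0 a; have e1 := h1 a; have e2 := h2 a
    have eP := hP a; have eSg := hSg a
    have c0 : (((idealF F S).filter fun f => a ∈ f).card : ℝ) +
        ((idealF F S).filter fun f => a ∉ f).card = (idealF F S).card := by
      exact_mod_cast congrArg (fun n : ℕ => (n : ℝ)) e0
    have c1 : (((idealF F S).filter fun f => a ∈ f ∧
          (riseWord F w f).erase a ∈ F.image (riseWord F w)).card : ℝ) +
        ((idealF F S).filter fun f => a ∈ f ∧
          (riseWord F w f).erase a ∉ F.image (riseWord F w)).card =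
        ((idealF F S).filter fun f => a ∈ f).card := by
      exact_mod_cast congrArg (fun n : ℕ => (n : ℝ)) e1
    have c2 : (((idealF F S).filter fun f => a ∉ f ∧ a ∈ riseWord F w f).card : ℝ) +
        ((idealF F S).filter fun f => a ∉ f ∧ a ∉ riseWord F w f).card =
        ((idealF F S).filter fun f => a ∉ f).card := by
      exact_mod_cast congrArg (fun n : ℕ => (n : ℝ)) e2
    have cP : ((upFilter S (pureF F w a)).card : ℝ) =
        ((idealF F S).filter fun f => a ∈ f ∧
          (riseWord F w f).erase a ∉ F.image (riseWord F w)).card := by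
      exact_mod_cast congrArg (fun n : ℕ => (n : ℝ)) eP
    have cSg : ((upFilter S (spurious F w a)).card : ℝ) =
        ((idealF F S).filter fun f => a ∉ f ∧ a ∈ riseWord F w f).card := by
      exact_mod_cast congrArg (fun n : ℕ => (n : ℝ)) eSg
    have ckey : (((idealF F S).filter fun f => a ∉ f ∧ a ∉ riseWord F w f).card : ℝ) ≤
        ((idealF F S).filter fun f => a ∈ f ∧
          (riseWord F w f).erase a ∈ F.image (riseWord F w)).card := by
      exact_mod_cast hkey
    linarith
  · intro hmin
    rw [hsum, hrhs]
    refine Finset.sum_congr rfl fun a _ => ?_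
    have hkey := key_eq hF hS hnd hmin a (hall a)
    have e0 := h0 a; have e1 := h1 a; have e2 := h2 a
    have eP := hP a; have eSg := hSg a
    have c0 : (((idealF F S).filter fun f => a ∈ f).card : ℝ) +
        ((idealF F S).filter fun f => a ∉ f).card = (idealF F S).card := by
      exact_mod_cast congrArg (fun n : ℕ => (n : ℝ)) e0
    have c1 : (((idealF F S).filter fun f => a ∈ f ∧
          (riseWord F w f).erase a ∈ F.image (riseWord F w)).card : ℝ) +
        ((idealF F S).filter fun f => a ∈ f ∧
          (riseWord F w f).erase a ∉ F.image (riseWord F w)).card =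
        ((idealF F S).filter fun f => a ∈ f).card := by
      exact_mod_cast congrArg (fun n : ℕ => (n : ℝ)) e1
    have c2 : (((idealF F S).filter fun f => a ∉ f ∧ a ∈ riseWord F w f).card : ℝ) +
        ((idealF F S).filter fun f => a ∉ f ∧ a ∉ riseWord F w f).card =
        ((idealF F S).filter fun f => a ∉ f).card := by
      exact_mod_cast congrArg (fun n : ℕ => (n : ℝ)) e2
    have cP : ((upFilter S (pureF F w a)).card : ℝ) =
        ((idealF F S).filter fun f => a ∈ f ∧
          (riseWord F w f).erase a ∉ F.image (riseWord F w)).card := by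
      exact_mod_cast congrArg (fun n : ℕ => (n : ℝ)) eP
    have cSg : ((upFilter S (spurious F w a)).card : ℝ) =
        ((idealF F S).filter fun f => a ∉ f ∧ a ∈ riseWord F w f).card := by
      exact_mod_cast congrArg (fun n : ℕ => (n : ℝ)) eSg
    have ckey : (((idealF F S).filter fun f => a ∉ f ∧ a ∉ riseWord F w f).card : ℝ) =
        ((idealF F S).filter fun f => a ∈ f ∧
          (riseWord F w f).erase a ∈ F.image (riseWord F w)).card := by
      exact_mod_cast congrArg (fun n : ℕ => (n : ℝ)) hkey
    linarith
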